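/- Let u : ℝ≥0 → ℝ≥0 be nondecreasing, doubling and sublinear, let L ≥ 1, and let f : (X,x₀) → (Y,y₀) be an (L,u,x₀)-Lipschitz map between pointed metric spaces. Let (x_n) be a sequence in X and (σ_n) positive reals with σ_n → ∞ and u(|x_n|)/σ_n → 0. If a sequence (x'_n) in X satisfies d(x_n, x'_n) ≤ M·σ_n for all n and some constant M ≥ 0, then there exists a constant M' ≥ 0 such that d(f(x_n), f(x'_n)) ≤ M'·σ_n for all n. (That is, f maps the precone of X with data ((x_n),(σ_n)) into the precone of Y with data ((f(x_n)),(σ_n)).) -/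

import Mathlib

open Filter Topology

/-- An `(L,u,x₀)`-Lipschitz map sends the precone of `X` with data
`((xₙ), (σₙ))` into the precone of `Y` with data `((f xₙ), (σₙ))`, provided the
cone data is `u`-admissible. -/
theorem sbe_maps_precone_into_precone
    {X Y : Type*} [MetricSpace X] [MetricSpace Y]
    (u : ℝ → ℝ)
    (hu0 : ∀ r, 0 ≤ r → 0 ≤ u r)
    (humono : MonotoneOn u (Set.Ici 0))
    (hudbl : ∃ C, 1 ≤ C ∧ ∀ r, 0 ≤ r → u (2 * r) ≤ C * u r)
    (husub : Tendsto (fun r => u r / r) atTop (𝓝 0))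
    (L : ℝ) (hL : 1 ≤ L) (x₀ : X) (y₀ : Y) (f : X → Y)
    (hf : ∀ x x', dist (f x) (f x') ≤ L * dist x x' + u (max (dist x x₀) (dist x' x₀)))
    (x : ℕ → X) (σ : ℕ → ℝ) (hσpos : ∀ n, 0 < σ n)
    (hσ : Tendsto σ atTop atTop)
    (hadm : Tendsto (fun n => u (dist (x n) x₀) / σ n) atTop (𝓝 0))
    (x' : ℕ → X) (M : ℝ) (hM : 0 ≤ M)
    (hx' : ∀ n, dist (x n) (x' n) ≤ M * σ n) :
    ∃ M', 0 ≤ M' ∧ ∀ n, dist (f (x n)) (f (x' n)) ≤ M' * σ n := by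
  obtain ⟨C, hC1, hCdbl⟩ := hudbl
  set M₁ : ℝ := max 1 M with hM₁def
  have hM₁pos : 0 < M₁ := lt_of_lt_of_le one_pos (le_max_left _ _)
  -- the auxiliary sequence
  set h : ℕ → ℝ := fun n =>
    C * (u (dist (x n) x₀) / σ n) + C * (u (M₁ * σ n) / σ n) with hhdef
  -- u (M₁ σ n) / σ n → 0
  have h2 : Tendsto (fun n => u (M₁ * σ n) / σ n) atTop (𝓝 0) := by
    have hcomp : Tendsto (fun n => u (M₁ * σ n) / (M₁ * σ n)) atTop (𝓝 0) :=
      husub.comp (hσ.const_mul_atTop hM₁pos)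
    have := hcomp.const_mul M₁
    rw [mul_zero] at this
    refine this.congr (fun n => ?_)
    have hσn := (hσpos n).ne'
    field_simp
  have hhto : Tendsto h atTop (𝓝 0) := by
    have := (hadm.const_mul C).add (h2.const_mul C)
    simpa using this
  obtain ⟨B, hB⟩ := hhto.bddAbove_range
  refine ⟨L * M + max B 0, by positivity, fun n => ?_⟩
  have hσn := hσpos n
  have ha : (0:ℝ) ≤ dist (x n) x₀ := dist_nonneg
  set a := dist (x n) x₀ with hadef
  set b := dist (x' n) x₀ with hbdef
  have hb : (0:ℝ) ≤ b := dist_nonneg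
  have hmax : max a b ≤ a + M * σ n := by
    refine max_le (le_add_of_nonneg_right (by positivity)) ?_
    calc b ≤ dist (x' n) (x n) + a := dist_triangle _ _ _
    _ ≤ M * σ n + a := by rw [dist_comm]; linarith [hx' n]
    _ = a + M * σ n := by ring
  have hMM₁ : M * σ n ≤ M₁ * σ n :=
    mul_le_mul_of_nonneg_right (le_max_right _ _) hσn.le
  have hsum2 : a + M * σ n ≤ 2 * max a (M₁ * σ n) := by
    have h1 : a ≤ max a (M₁ * σ n) := le_max_left _ _
    have h2' : M * σ n ≤ max a (M₁ * σ n) := hMM₁.trans (le_max_right _ _)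
    linarith
  have hmaxnn : (0:ℝ) ≤ max a (M₁ * σ n) := le_trans ha (le_max_left _ _)
  have key : u (max a b) ≤ h n * σ n := by
    have s1 : u (max a b) ≤ u (2 * max a (M₁ * σ n)) := by
      apply humono (Set.mem_Ici.mpr (le_trans ha (le_max_left _ _)))
        (Set.mem_Ici.mpr (by positivity))
      exact hmax.trans hsum2
    have s2 : u (2 * max a (M₁ * σ n)) ≤ C * u (max a (M₁ * σ n)) :=
      hCdbl _ hmaxnn
    have s3 : u (max a (M₁ * σ n)) ≤ u a + u (M₁ * σ n) := by
      rcases max_cases a (M₁ * σ n) with ⟨heq, _⟩ | ⟨heq, _⟩ <;> rw [heq]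
      · linarith [hu0 (M₁ * σ n) (by positivity)]
      · linarith [hu0 a ha]
    have s4 : C * u (max a (M₁ * σ n)) ≤ C * (u a + u (M₁ * σ n)) :=
      mul_le_mul_of_nonneg_left s3 (by linarith)
    have : h n * σ n = C * u a + C * u (M₁ * σ n) := by
      rw [hhdef]; field_simp; rfl
    rw [this]
    linarith
  have hBn : h n ≤ max B 0 :=
    le_trans (hB (Set.mem_range_self n)) (le_max_left _ _)
  calc dist (f (x n)) (f (x' n)) ≤ L * dist (x n) (x' n) + u (max a b) := hf _ _
    _ ≤ L * (M * σ n) + h n * σ n := by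
        refine add_le_add (mul_le_mul_of_nonneg_left (hx' n) (by linarith)) key
    _ ≤ L * (M * σ n) + max B 0 * σ n :=
        add_le_add_right (mul_le_mul_of_nonneg_right hBn hσn.le) _
    _ = (L * M + max B 0) * σ n := by ring
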